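/- For all integers k ≥ 1, s_{k+1} − s_k ≥ 4m − 2; in particular, the sequence (s_k)_{k ≥ 1} is strictly increasing. -/
import Mathlib


/-- `s k` for `k ≥ 1`: `s k = (k/p)·((4m−2)·p + 4) − 2m` if `p ∣ k`, and
`s k = (4m−2)·k + 2·⌊2k/p⌋ − 2m + 2` otherwise.  (For `k ≥ 1` and `p ≥ 3`,
integer division agrees with the floor of the rational quotient.) -/
def sSeq (m p k : ℤ) : ℤ :=
  if p ∣ k then (k / p) * ((4 * m - 2) * p + 4) - 2 * m
  else (4 * m - 2) * k + 2 * ((2 * k) / p) - 2 * m + 2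

private lemma two_ediv_aux (p : ℤ) (hp : 3 ≤ p) : (2 : ℤ) / p = 0 :=
  Int.ediv_eq_zero_of_lt (by norm_num) (by omega)

private lemma neg_two_ediv_aux (p : ℤ) (hp : 3 ≤ p) : (-2 : ℤ) / p = -1 := by
  have h0 : (p - 2) / p = 0 := Int.ediv_eq_zero_of_lt (by omega) (by omega)
  have h1 : (-2 + 1 * p) / p = -2 / p + 1 := Int.add_mul_ediv_right _ _ (by omega : p ≠ 0)
  have h2 : (-2 + 1 * p : ℤ) = p - 2 := by ring
  rw [h2, h0] at h1
  linarith

private lemma sSeq_step (m p : ℤ) (hm : 1 ≤ m) (hp : 3 ≤ p) (k : ℤ) (hk : 1 ≤ k) :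
    sSeq m p (k + 1) - sSeq m p k ≥ 4 * m - 2 := by
  have hp0 : (0 : ℤ) < p := by omega
  by_cases h1 : p ∣ k
  · have h2 : ¬ p ∣ (k + 1) := by
      intro h
      have : p ∣ 1 := (Int.dvd_add_right h1).mp h
      have := Int.le_of_dvd (by norm_num) this
      omega
    obtain ⟨q, hq⟩ := h1
    have e1 : k / p = q := by rw [hq]; exact Int.mul_ediv_cancel_left q (by omega)
    have e2 : (2 * (k + 1)) / p = 2 * q := by
      have h : 2 * (k + 1) = 2 + (2 * q) * p := by rw [hq]; ring
      rw [h, Int.add_mul_ediv_right _ _ (by omega : p ≠ 0), two_ediv_aux p hp]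
      ring
    have hd : p ∣ k := ⟨q, hq⟩
    simp only [sSeq, if_pos hd, if_neg h2]
    rw [e1, e2, hq]
    ring_nf
    linarith
  · by_cases h2 : p ∣ (k + 1)
    · obtain ⟨q, hq⟩ := h2
      have e1 : (k + 1) / p = q := by rw [hq]; exact Int.mul_ediv_cancel_left q (by omega)
      have e2 : (2 * k) / p = 2 * q - 1 := by
        have h : 2 * k = -2 + (2 * q) * p := by
          have : k = p * q - 1 := by omega
          rw [this]; ring
        rw [h, Int.add_mul_ediv_right _ _ (by omega : p ≠ 0), neg_two_ediv_aux p hp]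
        ring
      have hd : p ∣ (k + 1) := ⟨q, hq⟩
      simp only [sSeq, if_pos hd, if_neg h1]
      rw [e1, e2]
      have hk' : k = p * q - 1 := by omega
      rw [hk']
      ring_nf
      linarith
    · have hmono : (2 * k) / p ≤ (2 * (k + 1)) / p :=
        Int.ediv_le_ediv hp0 (by linarith)
      simp only [sSeq, if_neg h1, if_neg h2]
      linarith

theorem sSeq_strict_growth (m p : ℤ) (hm : 1 ≤ m) (hp : 3 ≤ p) :
    (∀ k : ℤ, 1 ≤ k → sSeq m p (k + 1) - sSeq m p k ≥ 4 * m - 2) ∧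
    (∀ k l : ℤ, 1 ≤ k → k < l → sSeq m p k < sSeq m p l) := by
  have hstep := sSeq_step m p hm hp
  refine ⟨hstep, ?_⟩
  intro k l hk hkl
  have key : ∀ l : ℤ, k + 1 ≤ l → sSeq m p k < sSeq m p l :=
    Int.le_induction (by have := hstep k hk; linarith)
      (fun n hn ih => by have := hstep n (by omega); linarith)
  exact key l (by omega)
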